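/- For a sequence lock protocol where the version counter is a natural number that writers increment from even to odd before modifying the data and from odd to even after, if a reader observes the same even version number before and after reading the data, then no write to the data occurred between the reader's two reads of the version number. -/
import Mathlib

/-- In a sequence-lock protocol the version counter `v` is monotone and is
odd at any time at which a data write occurs (writers increment from even to odd before
writing and back to even after). If a reader reads the same even version at times
`t1 ≤ t2`, then no data-write event occurs between the two reads. -/
theorem seqlock_no_write_between (v : ℕ → ℕ) (dataWrite : ℕ → Prop)
    (hmono : Monotone v)
    (hodd : ∀ t, dataWrite t → Odd (v t))
    (t1 t2 : ℕ) (h12 : t1 ≤ t2)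
    (heq : v t1 = v t2) (heven : Even (v t1)) :
    ∀ t, t1 ≤ t → t ≤ t2 → ¬ dataWrite t := by
  intro t h1 h2 hw
  have h : v t = v t1 := le_antisymm (heq ▸ hmono h2) (hmono h1)
  exact (Nat.not_odd_iff_even.mpr (h ▸ heven)) (hodd t hw)
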